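/- For all finite rank operators T : H → E and S : H → E*, the trace of S* ∘ T satisfies |tr(S* T)| ≤ ‖T‖_{γ(H,E)} · ‖S‖_{γ(H,E*)}. -/

import Mathlib

open MeasureTheory ProbabilityTheory Filter
open scoped ENNReal NNReal RealInnerProductSpace

/-- A sequence of independent standard Gaussian random variables. -/
def IsGaussianSeq {Ω : Type*} [MeasurableSpace Ω] (P : Measure Ω) (g : ℕ → Ω → ℝ) : Prop :=
  iIndepFun (m := fun _ => Real.measurableSpace) g P ∧ ∀ n, P.map (g n) = gaussianReal 0 1

/-- A finite rank continuous linear operator. -/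
def FiniteRank {H E : Type*} [NormedAddCommGroup H] [NormedSpace ℝ H]
    [NormedAddCommGroup E] [NormedSpace ℝ E] (T : H →L[ℝ] E) : Prop :=
  FiniteDimensional ℝ (LinearMap.range (T : H →ₗ[ℝ] E))

/-- `c` is the γ-radonifying norm of `T : H → E` with respect to the orthonormal basis `b` of `H`
and the independent standard Gaussian sequence `g` on `(Ω, P)`:
`c ≥ 0` and `E‖∑_{n<N} γ_n T b_n‖² → c²`. -/
def HasGammaNorm {Ω H E : Type*} [MeasurableSpace Ω]
    [NormedAddCommGroup H] [InnerProductSpace ℝ H]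
    [NormedAddCommGroup E] [NormedSpace ℝ E]
    (P : Measure Ω) (g : ℕ → Ω → ℝ) (b : ℕ → H) (T : H →L[ℝ] E) (c : ℝ) : Prop :=
  0 ≤ c ∧ Filter.Tendsto (fun N => ∫ ω, ‖∑ n ∈ Finset.range N, g n ω • T (b n)‖ ^ 2 ∂P)
    Filter.atTop (nhds (c ^ 2))




open MeasureTheory ProbabilityTheory Filter Real
open scoped ENNReal NNReal

lemma aux_gaussian_integral_eq (f : ℝ → ℝ) :
    ∫ x, f x ∂(gaussianReal 0 1) = ∫ x, gaussianPDFReal 0 1 x * f x := by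
  rw [gaussianReal_of_var_ne_zero 0 one_ne_zero]
  have h : gaussianPDF 0 1 = fun x => ((gaussianPDFReal 0 1 x).toNNReal : ℝ≥0∞) := rfl
  rw [h, integral_withDensity_eq_integral_smul
    (measurable_gaussianPDFReal 0 1).real_toNNReal f]
  congr 1
  ext x
  simp [NNReal.smul_def, Real.coe_toNNReal _ (gaussianPDFReal_nonneg 0 1 x)]

lemma aux_gaussianPDFReal_01 (x : ℝ) :
    gaussianPDFReal 0 1 x = (√(2 * π))⁻¹ * Real.exp (-(2⁻¹ : ℝ) * x ^ 2) := by
  simp only [gaussianPDFReal, NNReal.coe_one, mul_one, sub_zero]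
  ring_nf

lemma aux_integrable_sq_pdf :
    Integrable (fun x : ℝ => gaussianPDFReal 0 1 x * x ^ 2) := by
  have h := (integrable_rpow_mul_exp_neg_mul_sq (b := 2⁻¹) (by norm_num) (s := 2)
    (by norm_num)).const_mul (√(2 * π))⁻¹
  refine h.congr ?_
  filter_upwards with x
  rw [aux_gaussianPDFReal_01, Real.rpow_two]
  ring

lemma aux_integral_id_gaussian : ∫ x, x ∂(gaussianReal 0 1) = 0 := by
  rw [aux_gaussian_integral_eq]
  have hodd : ∀ x : ℝ, gaussianPDFReal 0 1 (-x) * (-x) = -(gaussianPDFReal 0 1 x * x) := by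
    intro x
    rw [aux_gaussianPDFReal_01, aux_gaussianPDFReal_01]
    ring_nf
  have hneg := integral_neg_eq_self (fun x => gaussianPDFReal 0 1 x * x) volume
  have h2 : ∫ x, gaussianPDFReal 0 1 x * x = - ∫ x, gaussianPDFReal 0 1 x * x := by
    conv_lhs => rw [← hneg]
    simp_rw [hodd]
    exact integral_neg _
  linarith

lemma aux_Gamma_three_halves : Real.Gamma (3 / 2) = √π / 2 := by
  have h := Real.Gamma_add_one (s := 1 / 2) (by norm_num)
  rw [Real.Gamma_one_half_eq] at h
  norm_num at h
  linarith

lemma aux_integral_sq_gaussian : ∫ x, x ^ 2 ∂(gaussianReal 0 1) = 1 := by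
  rw [aux_gaussian_integral_eq]
  have h1 : ∀ x : ℝ, gaussianPDFReal 0 1 x * x ^ 2
      = (√(2 * π))⁻¹ * (x ^ 2 * rexp (-(2⁻¹ : ℝ) * x ^ 2)) := fun x => by
    rw [aux_gaussianPDFReal_01]; ring
  simp_rw [h1, integral_const_mul]
  have h3 : (∫ x : ℝ, x ^ 2 * rexp (-(2⁻¹ : ℝ) * x ^ 2))
      = 2 * ∫ x in Set.Ioi (0 : ℝ), x ^ 2 * rexp (-(2⁻¹ : ℝ) * x ^ 2) := by
    rw [← integral_comp_abs (f := fun y => y ^ 2 * rexp (-(2⁻¹ : ℝ) * y ^ 2))]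
    congr 1
    ext x
    simp [sq_abs]
  have h4 : (∫ x in Set.Ioi (0 : ℝ), x ^ 2 * rexp (-(2⁻¹ : ℝ) * x ^ 2))
      = (2⁻¹ : ℝ) ^ (-(3 : ℝ) / 2) * (1 / 2) * Real.Gamma (3 / 2) := by
    have h := integral_rpow_mul_exp_neg_mul_rpow (p := 2) (q := 2) (b := 2⁻¹)
      (by norm_num) (by norm_num) (by norm_num)
    simp_rw [Real.rpow_two] at h
    rw [h]
    norm_num
  have h5 : (2⁻¹ : ℝ) ^ (-(3 : ℝ) / 2) = 2 * √2 := by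
    rw [Real.inv_rpow (by norm_num), ← Real.rpow_neg (by norm_num), neg_div, neg_neg,
      show (3:ℝ)/2 = 1 + 1/2 by norm_num, Real.rpow_add (by norm_num), Real.rpow_one,
      ← Real.sqrt_eq_rpow]
  rw [h3, h4, h5, aux_Gamma_three_halves, Real.sqrt_mul (by norm_num : (0:ℝ) ≤ 2)]
  have h2 : √(2:ℝ) ≠ 0 := by positivity
  have hπ : √π ≠ 0 := by positivity
  field_simp

lemma aux_memℒp_two_gaussian : MemLp (fun x : ℝ => x) 2 (gaussianReal 0 1) := by
  rw [memLp_two_iff_integrable_sq (f := fun x : ℝ => x) aestronglyMeasurable_id]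
  rw [gaussianReal_of_var_ne_zero 0 one_ne_zero,
    show gaussianPDF 0 1 = fun x => ((gaussianPDFReal 0 1 x).toNNReal : ℝ≥0∞) from rfl,
    integrable_withDensity_iff_integrable_smul (measurable_gaussianPDFReal 0 1).real_toNNReal]
  refine aux_integrable_sq_pdf.congr ?_
  filter_upwards with x
  simp [NNReal.smul_def, Real.coe_toNNReal _ (gaussianPDFReal_nonneg 0 1 x)]


open MeasureTheory ProbabilityTheory Filter Real
open scoped ENNReal NNReal RealInnerProductSpace

lemma aux_cauchy_schwarz {Ω : Type*} [MeasurableSpace Ω] (P : Measure Ω)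
    (u v : Ω → ℝ) (hu : MemLp u 2 P) (hv : MemLp v 2 P) :
    |∫ ω, u ω * v ω ∂P| ≤ √(∫ ω, u ω ^ 2 ∂P) * √(∫ ω, v ω ^ 2 ∂P) := by
  set F := hu.toLp u with hF
  set G := hv.toLp v with hG
  have h1 : ⟪F, G⟫ = ∫ ω, u ω * v ω ∂P := by
    rw [L2.inner_def]
    apply integral_congr_ae
    filter_upwards [hu.coeFn_toLp, hv.coeFn_toLp] with ω h h'
    rw [h, h']
    simp [RCLike.inner_apply, mul_comm]
  have h2 : √(∫ ω, u ω ^ 2 ∂P) = ‖F‖ := by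
    have : ⟪F, F⟫ = ∫ ω, u ω ^ 2 ∂P := by
      rw [L2.inner_def]
      apply integral_congr_ae
      filter_upwards [hu.coeFn_toLp] with ω h
      rw [h]
      simp [RCLike.inner_apply, sq]
    rw [real_inner_self_eq_norm_sq] at this
    rw [← this, Real.sqrt_sq (norm_nonneg _)]
  have h3 : √(∫ ω, v ω ^ 2 ∂P) = ‖G‖ := by
    have : ⟪G, G⟫ = ∫ ω, v ω ^ 2 ∂P := by
      rw [L2.inner_def]
      apply integral_congr_ae
      filter_upwards [hv.coeFn_toLp] with ω h
      rw [h]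
      simp [RCLike.inner_apply, sq]
    rw [real_inner_self_eq_norm_sq] at this
    rw [← this, Real.sqrt_sq (norm_nonneg _)]
  rw [← h1, h2, h3]
  exact abs_real_inner_le_norm F G

section Main

open MeasureTheory ProbabilityTheory Filter Real
open scoped ENNReal NNReal RealInnerProductSpace

theorem clark_ocone_statement0 {Ω H E : Type*} [MeasurableSpace Ω]
    [NormedAddCommGroup H] [InnerProductSpace ℝ H] [CompleteSpace H]
    [NormedAddCommGroup E] [NormedSpace ℝ E] [CompleteSpace E]
    (P : Measure Ω) [IsProbabilityMeasure P]
    (g : ℕ → Ω → ℝ) (hg : IsGaussianSeq P g)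
    (b : ℕ → H) (hb : Orthonormal ℝ b)
    (hbtot : (Submodule.span ℝ (Set.range b)).topologicalClosure = ⊤)
    (T : H →L[ℝ] E) (S : H →L[ℝ] (E →L[ℝ] ℝ))
    (hT : FiniteRank T) (hS : FiniteRank S)
    (cT cS τ : ℝ)
    (hcT : HasGammaNorm P g b T cT) (hcS : HasGammaNorm P g b S cS)
    (hτ : HasSum (fun n => (S (b n)) (T (b n))) τ) :
    |τ| ≤ cT * cS := by
  obtain ⟨hindep, hmap⟩ := hg
  -- basic measurability and integrability of the Gaussians
  have hae : ∀ n, AEMeasurable (g n) P := by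
    intro n
    by_contra h
    have h0 := hmap n
    rw [Measure.map_of_not_aemeasurable h] at h0
    have := congrArg (fun μ : Measure ℝ => μ Set.univ) h0
    simp at this
  have hmem2 : ∀ n, MemLp (g n) 2 P := by
    intro n
    have h := aux_memℒp_two_gaussian
    rw [← hmap n] at h
    exact (memLp_map_measure_iff aestronglyMeasurable_id (hae n)).mp h
  have hint_mul : ∀ n m, Integrable (fun ω => g n ω * g m ω) P := by
    intro n m
    have hpqr : (1 : ℝ≥0∞) / 1 = 1 / 2 + 1 / 2 := by
      have h22 : (2 : ℝ≥0∞) / 2 = 1 := ENNReal.div_self (by norm_num) (by norm_num)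
      rw [ENNReal.div_add_div_same]
      norm_num [h22]
    have h : MemLp (g n • g m) 1 P := (hmem2 m).smul (hmem2 n)
    exact memLp_one_iff_integrable.mp h
  have hmean : ∀ n, ∫ ω, g n ω ∂P = 0 := by
    intro n
    have h1 : ∫ x, x ∂(P.map (g n)) = ∫ ω, g n ω ∂P :=
      integral_map (hae n) aestronglyMeasurable_id
    rw [← h1, hmap n, aux_integral_id_gaussian]
  have hmoment : ∀ n m, ∫ ω, g n ω * g m ω ∂P = if n = m then 1 else 0 := by
    intro n m
    by_cases h : n = m
    · subst h
      rw [if_pos rfl]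
      have h1 : ∫ x : ℝ, x * x ∂(P.map (g n)) = ∫ ω, g n ω * g n ω ∂P :=
        integral_map (hae n) (aestronglyMeasurable_id.mul aestronglyMeasurable_id)
      rw [← h1, hmap n]
      rw [show (fun x : ℝ => x * x) = fun x : ℝ => x ^ 2 by ext x; ring]
      exact aux_integral_sq_gaussian
    · rw [if_neg h]
      have hind : IndepFun (g n) (g m) P := hindep.indepFun h
      rw [hind.integral_fun_mul_eq_mul_integral (hae n).aestronglyMeasurable (hae m).aestronglyMeasurable,
        hmean n, zero_mul]
  -- the random sums
  set X : ℕ → Ω → E := fun N ω => ∑ n ∈ Finset.range N, g n ω • T (b n) with hX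
  set Y : ℕ → Ω → (E →L[ℝ] ℝ) := fun N ω => ∑ n ∈ Finset.range N, g n ω • S (b n) with hY
  have hXmem : ∀ N, MemLp (X N) 2 P := by
    intro N
    simp only [hX]
    exact memLp_finset_sum (Finset.range N)
      (fun n _ => MemLp.smul (memLp_top_const (T (b n))) (hmem2 n))
  have hYmem : ∀ N, MemLp (Y N) 2 P := by
    intro N
    simp only [hY]
    exact memLp_finset_sum (ε' := E →L[ℝ] ℝ) (Finset.range N)
      (fun n _ => MemLp.smul (memLp_top_const (S (b n))) (hmem2 n))
  -- the partial trace equals an integral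
  have key : ∀ N, (∑ n ∈ Finset.range N, (S (b n)) (T (b n)))
      = ∫ ω, (Y N ω) (X N ω) ∂P := by
    intro N
    have expand : ∀ ω, (Y N ω) (X N ω)
        = ∑ n ∈ Finset.range N, ∑ m ∈ Finset.range N,
            g n ω * g m ω * (S (b n)) (T (b m)) := by
      intro ω
      simp only [hX, hY, ContinuousLinearMap.sum_apply, ContinuousLinearMap.smul_apply,
        map_sum, _root_.map_smul, smul_eq_mul, Finset.mul_sum]
      rw [Finset.sum_comm]
      exact Finset.sum_congr rfl fun n _ => Finset.sum_congr rfl fun m _ => by ring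
    simp_rw [expand]
    rw [integral_finset_sum _ (fun n _ => integrable_finset_sum _
      (fun m _ => (hint_mul n m).mul_const _))]
    have : ∀ n ∈ Finset.range N,
        (∫ ω, ∑ m ∈ Finset.range N, g n ω * g m ω * (S (b n)) (T (b m)) ∂P)
          = (S (b n)) (T (b n)) := by
      intro n hn
      rw [integral_finset_sum _ (fun m _ => (hint_mul n m).mul_const _)]
      have h2 : ∀ m ∈ Finset.range N,
          (∫ ω, g n ω * g m ω * (S (b n)) (T (b m)) ∂P)
            = if n = m then (S (b n)) (T (b m)) else 0 := by
        intro m _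
        rw [integral_mul_const, hmoment n m]
        split_ifs <;> ring
      rw [Finset.sum_congr rfl h2, Finset.sum_ite_eq, if_pos hn]
    rw [Finset.sum_congr rfl this]
  -- Cauchy-Schwarz bound on the partial traces
  have hbound : ∀ N, |∑ n ∈ Finset.range N, (S (b n)) (T (b n))|
      ≤ √(∫ ω, ‖Y N ω‖ ^ 2 ∂P) * √(∫ ω, ‖X N ω‖ ^ 2 ∂P) := by
    intro N
    rw [key N]
    have hint_norms : Integrable (fun ω => ‖Y N ω‖ * ‖X N ω‖) P := by
      have hpqr : (1 : ℝ≥0∞) / 1 = 1 / 2 + 1 / 2 := by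
        have h22 : (2 : ℝ≥0∞) / 2 = 1 := ENNReal.div_self (by norm_num) (by norm_num)
        rw [ENNReal.div_add_div_same]
        norm_num [h22]
      have h : MemLp ((fun ω => ‖Y N ω‖) • (fun ω => ‖X N ω‖)) 1 P :=
        ((hXmem N).norm).smul ((hYmem N).norm)
      exact memLp_one_iff_integrable.mp h
    have step1 : |∫ ω, (Y N ω) (X N ω) ∂P| ≤ ∫ ω, ‖Y N ω‖ * ‖X N ω‖ ∂P := by
      rw [← Real.norm_eq_abs]
      refine (norm_integral_le_integral_norm _).trans ?_
      refine integral_mono_of_nonneg (Eventually.of_forall fun ω => norm_nonneg _)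
        hint_norms (Eventually.of_forall fun ω => ?_)
      exact (Y N ω).le_opNorm (X N ω)
    refine step1.trans ?_
    refine le_trans (le_abs_self _) ?_
    exact aux_cauchy_schwarz P (fun ω => ‖Y N ω‖) (fun ω => ‖X N ω‖)
      (hYmem N).norm (hXmem N).norm
  -- pass to the limit
  have hlimX : Tendsto (fun N => √(∫ ω, ‖X N ω‖ ^ 2 ∂P)) atTop (nhds cT) := by
    have h := (Real.continuous_sqrt.tendsto (cT ^ 2)).comp hcT.2
    rwa [Real.sqrt_sq hcT.1] at h
  have hlimY : Tendsto (fun N => √(∫ ω, ‖Y N ω‖ ^ 2 ∂P)) atTop (nhds cS) := by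
    have h := (Real.continuous_sqrt.tendsto (cS ^ 2)).comp hcS.2
    rwa [Real.sqrt_sq hcS.1] at h
  have hlim : Tendsto (fun N => √(∫ ω, ‖Y N ω‖ ^ 2 ∂P) * √(∫ ω, ‖X N ω‖ ^ 2 ∂P))
      atTop (nhds (cS * cT)) := hlimY.mul hlimX
  have habs : Tendsto (fun N => |∑ n ∈ Finset.range N, (S (b n)) (T (b n))|)
      atTop (nhds |τ|) := (continuous_abs.tendsto τ).comp hτ.tendsto_sum_nat
  have := le_of_tendsto_of_tendsto' habs hlim hbound
  linarith [this]

end Main
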